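/- Let d₁, d₂, d₃, d₄ be nonnegative real numbers with d₁+d₂+d₃+d₄ = 1 and let ρ_d be the diagonal matrix indexed by (Fin 2 × Fin 2) with diagonal entries d₁, d₂, d₃, d₄ in the order (0,0),(0,1),(1,0),(1,1). For real λ₁, λ₂, λ₃ define U_g(λ₁,λ₂,λ₃) = exp(−i(λ₁ σ₁⊗ₖσ₁ + λ₂ σ₂⊗ₖσ₂ + λ₃ σ₃⊗ₖσ₃)). If for all λ₁, λ₂, λ₃ ∈ ℝ the matrix U_g† ρ_d U_g satisfies the zero-discord block condition, then there exists s ∈ ℝ such that the multiset {d₁, d₂, d₃, d₄} equals {s, s, 1/2 − s, 1/2 − s}. -/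

import Mathlib

open Matrix
open scoped Kronecker

noncomputable def pauli1 : Matrix (Fin 2) (Fin 2) ℂ := !![0, 1; 1, 0]
noncomputable def pauli2 : Matrix (Fin 2) (Fin 2) ℂ := !![0, -Complex.I; Complex.I, 0]
noncomputable def pauli3 : Matrix (Fin 2) (Fin 2) ℂ := !![1, 0; 0, -1]

/-- The Cartan global unitary `U_g(λ₁,λ₂,λ₃) = exp(−i(λ₁σ₁⊗σ₁ + λ₂σ₂⊗σ₂ + λ₃σ₃⊗σ₃))`. -/
noncomputable def cartanUg (l1 l2 l3 : ℝ) :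
    Matrix (Fin 2 × Fin 2) (Fin 2 × Fin 2) ℂ :=
  NormedSpace.exp ((-Complex.I) •
    ((l1 : ℂ) • (pauli1 ⊗ₖ pauli1) + (l2 : ℂ) • (pauli2 ⊗ₖ pauli2) +
      (l3 : ℂ) • (pauli3 ⊗ₖ pauli3)))

def qblock (M : Matrix (Fin 2 × Fin 2) (Fin 2 × Fin 2) ℂ) (a b : Fin 2) :
    Matrix (Fin 2) (Fin 2) ℂ :=
  fun e f => M (a, e) (b, f)

def ZeroDiscordBlockCondition (M : Matrix (Fin 2 × Fin 2) (Fin 2 × Fin 2) ℂ) : Prop :=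
  (∀ a b : Fin 2, qblock M a b * (qblock M a b)ᴴ = (qblock M a b)ᴴ * qblock M a b) ∧
  (∀ a b a' b' : Fin 2, qblock M a b * qblock M a' b' = qblock M a' b' * qblock M a b)

/- ## Auxiliary development -/

noncomputable def rt : ℂ := ((Real.sqrt 2 : ℝ) : ℂ)⁻¹

lemma hrt : rt * rt = 2⁻¹ := by
  rw [rt, ← mul_inv, ← Complex.ofReal_mul, Real.mul_self_sqrt (by norm_num)]
  norm_num

noncomputable def z : ℂ := -(Real.pi/4 : ℝ) * Complex.I

noncomputable def cc : ℂ := ((Real.sqrt 2 / 2 : ℝ) : ℂ)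

lemma hexpz : Complex.exp z = cc - cc * Complex.I := by
  rw [z, Complex.exp_mul_I, Complex.cos_neg, Complex.sin_neg, ← Complex.ofReal_cos,
    ← Complex.ofReal_sin, Real.cos_pi_div_four, Real.sin_pi_div_four]
  rw [cc]; ring

lemma hexpz' : Complex.exp (-z) = cc + cc * Complex.I := by
  rw [show -z = ((Real.pi/4 : ℝ) : ℂ) * Complex.I from by rw [z]; ring,
    Complex.exp_mul_I, ← Complex.ofReal_cos,
    ← Complex.ofReal_sin, Real.cos_pi_div_four, Real.sin_pi_div_four]
  rw [cc]

/- Case 1: rotation in the (0,0),(1,1) plane -/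

noncomputable def T1 : Matrix (Fin 2 × Fin 2) (Fin 2 × Fin 2) ℂ :=
  Matrix.of fun p q =>
    if p = (0,0) then (if q = (0,0) then rt else if q = (1,1) then rt else 0)
    else if p = (1,1) then (if q = (0,0) then rt else if q = (1,1) then -rt else 0)
    else if q = p then 1 else 0

lemma hT1 : T1 * T1 = 1 := by
  ext ⟨pa,pb⟩ ⟨qa,qb⟩
  fin_cases pa <;> fin_cases pb <;> fin_cases qa <;> fin_cases qb <;>
    simp [T1, Matrix.mul_apply, Fintype.sum_prod_type, Fin.sum_univ_two, Matrix.one_apply,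
      Prod.ext_iff, hrt] <;> ring_nf

noncomputable def v1 : Fin 2 × Fin 2 → ℂ := fun p =>
  if p = (0,0) then z else if p = (1,1) then -z else 0

lemma hS1 : (-Complex.I) •
    (((Real.pi/8 : ℝ) : ℂ) • (pauli1 ⊗ₖ pauli1) + (((-(Real.pi/8) : ℝ)) : ℂ) • (pauli2 ⊗ₖ pauli2) +
      (((0:ℝ)) : ℂ) • (pauli3 ⊗ₖ pauli3)) = T1 * Matrix.diagonal v1 * T1 := by
  ext ⟨pa,pb⟩ ⟨qa,qb⟩
  fin_cases pa <;> fin_cases pb <;> fin_cases qa <;> fin_cases qb <;>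
    simp [T1, v1, z, pauli1, pauli2, pauli3, Matrix.mul_apply, Fintype.sum_prod_type,
      Fin.sum_univ_two, Matrix.diagonal, Prod.ext_iff, Complex.ofReal_neg] <;>
    ring_nf <;>
    simp [rt, ← Complex.ofReal_pow, Real.sq_sqrt] <;> ring

lemma hU1 : cartanUg (Real.pi/8) (-(Real.pi/8)) 0
    = T1 * Matrix.diagonal (fun p => Complex.exp (v1 p)) * T1 := by
  rw [cartanUg, hS1]
  have hinv : T1⁻¹ = T1 := Matrix.inv_eq_left_inv hT1
  have hu : IsUnit T1 := ⟨⟨T1, T1, hT1, hT1⟩, rfl⟩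
  have e1 : T1 * Matrix.diagonal v1 * T1 = T1 * Matrix.diagonal v1 * T1⁻¹ := by rw [hinv]
  rw [e1, Matrix.exp_conj T1 _ hu, hinv, Matrix.exp_diagonal]
  congr 2
  rw [Pi.exp_def]
  funext p
  rw [← Complex.exp_eq_exp_ℂ]

noncomputable def U1e : Matrix (Fin 2 × Fin 2) (Fin 2 × Fin 2) ℂ :=
  Matrix.of fun p q =>
    if p = (0,0) then (if q = (0,0) then cc else if q = (1,1) then -cc * Complex.I else 0)
    else if p = (1,1) then (if q = (0,0) then -cc * Complex.I else if q = (1,1) then cc else 0)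
    else if q = p then 1 else 0

lemma hU1e : cartanUg (Real.pi/8) (-(Real.pi/8)) 0 = U1e := by
  rw [hU1]
  ext ⟨pa,pb⟩ ⟨qa,qb⟩
  fin_cases pa <;> fin_cases pb <;> fin_cases qa <;> fin_cases qb <;>
    simp [T1, U1e, v1, Matrix.mul_apply, Fintype.sum_prod_type, Fin.sum_univ_two,
      Matrix.diagonal, Prod.ext_iff, hexpz, hexpz'] <;> ring_nf <;>
    simp [hrt, cc, rt, inv_pow, ← Complex.ofReal_pow,
      Real.sq_sqrt (show (0:ℝ) ≤ 2 by norm_num)] <;> ring_nf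

/- Case 2: rotation in the (0,1),(1,0) plane -/

noncomputable def T2 : Matrix (Fin 2 × Fin 2) (Fin 2 × Fin 2) ℂ :=
  Matrix.of fun p q =>
    if p = (0,1) then (if q = (0,1) then rt else if q = (1,0) then rt else 0)
    else if p = (1,0) then (if q = (0,1) then rt else if q = (1,0) then -rt else 0)
    else if q = p then 1 else 0

lemma hT2 : T2 * T2 = 1 := by
  ext ⟨pa,pb⟩ ⟨qa,qb⟩
  fin_cases pa <;> fin_cases pb <;> fin_cases qa <;> fin_cases qb <;>
    simp [T2, Matrix.mul_apply, Fintype.sum_prod_type, Fin.sum_univ_two, Matrix.one_apply,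
      Prod.ext_iff, hrt] <;> ring_nf

noncomputable def v2 : Fin 2 × Fin 2 → ℂ := fun p =>
  if p = (0,1) then z else if p = (1,0) then -z else 0

lemma hS2 : (-Complex.I) •
    (((Real.pi/8 : ℝ) : ℂ) • (pauli1 ⊗ₖ pauli1) + (((Real.pi/8 : ℝ)) : ℂ) • (pauli2 ⊗ₖ pauli2) +
      (((0:ℝ)) : ℂ) • (pauli3 ⊗ₖ pauli3)) = T2 * Matrix.diagonal v2 * T2 := by
  ext ⟨pa,pb⟩ ⟨qa,qb⟩
  fin_cases pa <;> fin_cases pb <;> fin_cases qa <;> fin_cases qb <;>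
    simp [T2, v2, z, pauli1, pauli2, pauli3, Matrix.mul_apply, Fintype.sum_prod_type,
      Fin.sum_univ_two, Matrix.diagonal, Prod.ext_iff, Complex.ofReal_neg] <;>
    ring_nf <;>
    simp [rt, ← Complex.ofReal_pow, Real.sq_sqrt] <;> ring

lemma hU2 : cartanUg (Real.pi/8) (Real.pi/8) 0
    = T2 * Matrix.diagonal (fun p => Complex.exp (v2 p)) * T2 := by
  rw [cartanUg, hS2]
  have hinv : T2⁻¹ = T2 := Matrix.inv_eq_left_inv hT2
  have hu : IsUnit T2 := ⟨⟨T2, T2, hT2, hT2⟩, rfl⟩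
  have e1 : T2 * Matrix.diagonal v2 * T2 = T2 * Matrix.diagonal v2 * T2⁻¹ := by rw [hinv]
  rw [e1, Matrix.exp_conj T2 _ hu, hinv, Matrix.exp_diagonal]
  congr 2
  rw [Pi.exp_def]
  funext p
  rw [← Complex.exp_eq_exp_ℂ]

noncomputable def U2e : Matrix (Fin 2 × Fin 2) (Fin 2 × Fin 2) ℂ :=
  Matrix.of fun p q =>
    if p = (0,1) then (if q = (0,1) then cc else if q = (1,0) then -cc * Complex.I else 0)
    else if p = (1,0) then (if q = (0,1) then -cc * Complex.I else if q = (1,0) then cc else 0)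
    else if q = p then 1 else 0

lemma hU2e : cartanUg (Real.pi/8) (Real.pi/8) 0 = U2e := by
  rw [hU2]
  ext ⟨pa,pb⟩ ⟨qa,qb⟩
  fin_cases pa <;> fin_cases pb <;> fin_cases qa <;> fin_cases qb <;>
    simp [T2, U2e, v2, Matrix.mul_apply, Fintype.sum_prod_type, Fin.sum_univ_two,
      Matrix.diagonal, Prod.ext_iff, hexpz, hexpz'] <;> ring_nf <;>
    simp [hrt, cc, rt, inv_pow, ← Complex.ofReal_pow,
      Real.sq_sqrt (show (0:ℝ) ≤ 2 by norm_num)] <;> ring_nf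

theorem necessary_condition_absolute_zero_discord
    (d1 d2 d3 d4 : ℝ) (h1 : 0 ≤ d1) (h2 : 0 ≤ d2) (h3 : 0 ≤ d3) (h4 : 0 ≤ d4)
    (hsum : d1 + d2 + d3 + d4 = 1)
    (ρd : Matrix (Fin 2 × Fin 2) (Fin 2 × Fin 2) ℂ)
    (hρd : ρd = Matrix.diagonal (fun p : Fin 2 × Fin 2 =>
      if p = (0, 0) then (d1 : ℂ) else if p = (0, 1) then (d2 : ℂ)
      else if p = (1, 0) then (d3 : ℂ) else (d4 : ℂ)))
    (h : ∀ l1 l2 l3 : ℝ,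
      ZeroDiscordBlockCondition ((cartanUg l1 l2 l3)ᴴ * ρd * cartanUg l1 l2 l3)) :
    ∃ s : ℝ, ({d1, d2, d3, d4} : Multiset ℝ) = {s, s, 1 / 2 - s, 1 / 2 - s} := by
  have hcne : ((Real.sqrt 2 / 2 : ℝ) : ℂ) ≠ 0 := by norm_num
  -- first constraint: d1 = d4
  have hd14 : d1 = d4 := by
    have hD := (h (Real.pi/8) (-(Real.pi/8)) 0).1 0 1
    rw [hU1e] at hD
    have he := congrFun (congrFun hD 0) 0
    simp [qblock, Matrix.mul_apply, Matrix.conjTranspose_apply, Fin.sum_univ_two,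
      Fintype.sum_prod_type, U1e, hρd, Matrix.diagonal, Prod.ext_iff] at he
    have h3 : ((d4:ℂ) - d1) * (((Real.sqrt 2/2:ℝ):ℂ) * ((Real.sqrt 2/2:ℝ):ℂ) * Complex.I) = 0 := by
      simp only [cc, Complex.conj_ofReal] at he
      rcases he with he | he
      · linear_combination he
      · linear_combination -he
    rcases mul_eq_zero.1 h3 with h4 | h4
    · have h5 : (d4:ℂ) = d1 := sub_eq_zero.1 h4
      exact_mod_cast h5.symm
    · exact absurd h4 (by simp [Complex.I_ne_zero, hcne])
  -- second constraint: d2 = d3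
  have hd23 : d2 = d3 := by
    have hD := (h (Real.pi/8) (Real.pi/8) 0).1 0 1
    rw [hU2e] at hD
    have he := congrFun (congrFun hD 1) 1
    simp [qblock, Matrix.mul_apply, Matrix.conjTranspose_apply, Fin.sum_univ_two,
      Fintype.sum_prod_type, U2e, hρd, Matrix.diagonal, Prod.ext_iff] at he
    have h3 : ((d3:ℂ) - d2) * (((Real.sqrt 2/2:ℝ):ℂ) * ((Real.sqrt 2/2:ℝ):ℂ) * Complex.I) = 0 := by
      simp only [cc, Complex.conj_ofReal] at he
      rcases he with he | he
      · linear_combination he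
      · linear_combination -he
    rcases mul_eq_zero.1 h3 with h4 | h4
    · have h5 : (d3:ℂ) = d2 := sub_eq_zero.1 h4
      exact_mod_cast h5.symm
    · exact absurd h4 (by simp [Complex.I_ne_zero, hcne])
  refine ⟨d1, ?_⟩
  have hd2 : (1:ℝ)/2 - d1 = d2 := by
    subst hd14 hd23; linarith
  have key : ∀ a b : ℝ, ({a, b, b, a} : Multiset ℝ) = ({a, a, b, b} : Multiset ℝ) := by
    intro a b
    show (a ::ₘ b ::ₘ b ::ₘ a ::ₘ 0 : Multiset ℝ) = a ::ₘ a ::ₘ b ::ₘ b ::ₘ 0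
    rw [Multiset.cons_swap b a, Multiset.cons_swap b a]
  rw [← hd14, ← hd23, ← hd2]
  exact key d1 (1/2 - d1)
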